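/- Let k be a positive integer and let S be a piecewise syndetic subset of the integers ℤ. Then the set {(a,d) ∈ ℤ × ℤ : a, a+d, a+2d, …, a+kd ∈ S} is piecewise syndetic in the additive group ℤ². -/
import Mathlib

open Filter Set

/-- `A` is thick in an additive commutative semigroup: every finite nonempty set
can be translated into `A`. -/
def Thick {T : Type*} [AddCommSemigroup T] (A : Set T) : Prop :=
  ∀ E : Finset T, E.Nonempty → ∃ z : T, ∀ e ∈ E, e + z ∈ A

/-- `A` is piecewise syndetic: there is a finite nonempty set `G` such that
`⋃_{g ∈ G} (-g + A)` is thick. -/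
def PiecewiseSyndetic {T : Type*} [AddCommSemigroup T] (A : Set T) : Prop :=
  ∃ G : Finset T, G.Nonempty ∧ Thick {s : T | ∃ g ∈ G, g + s ∈ A}


attribute [local instance] Ultrafilter.add Ultrafilter.addSemigroup

namespace FGaux

variable {X : Type*} [AddSemigroup X] [TopologicalSpace X]

/-- `L` is a nonempty closed left ideal of the subsemigroup `T`. -/
def IsLI (T L : Set X) : Prop :=
  L.Nonempty ∧ IsClosed L ∧ L ⊆ T ∧ ∀ t ∈ T, ∀ l ∈ L, t + l ∈ L

/-- `L` is a minimal nonempty closed left ideal of `T`. -/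
def MinLI (T L : Set X) : Prop := IsLI T L ∧ ∀ L', IsLI T L' → L' ⊆ L → L' = L

/-- `x` belongs to some minimal closed left ideal of `T`. -/
def Mini (T : Set X) (x : X) : Prop := ∃ L, MinLI T L ∧ x ∈ L

theorem exists_minLI [CompactSpace X] {T L0 : Set X} (h : IsLI T L0) :
    ∃ L, MinLI T L ∧ L ⊆ L0 := by
  have key : ∀ c ⊆ {L : Set X | IsLI T L}, IsChain (· ⊆ ·) c → c.Nonempty →
      ∃ lb ∈ {L : Set X | IsLI T L}, ∀ s ∈ c, lb ⊆ s := by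
    intro c hcS hchain hcne
    refine ⟨⋂₀ c, ⟨?_, isClosed_sInter fun t ht => (hcS ht).2.1, ?_, ?_⟩,
        fun s hs => sInter_subset_of_mem hs⟩
    · rw [sInter_eq_iInter]
      haveI := hcne.coe_sort
      have hchain2 : IsChain (· ⊇ ·) c := hchain.symm
      have hdir : DirectedOn (· ⊇ ·) c := hchain2.directedOn
      exact IsCompact.nonempty_iInter_of_directed_nonempty_isCompact_isClosed
        (fun i : c => (i : Set X)) hdir.directed_val
        (fun i => (hcS i.2).1) (fun i => (hcS i.2).2.1.isCompact) (fun i => (hcS i.2).2.1)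
    · obtain ⟨c0, hc0⟩ := hcne
      exact fun x hx => (hcS hc0).2.2.1 (mem_sInter.1 hx _ hc0)
    · intro t ht l hl
      exact mem_sInter.2 fun s hs => (hcS hs).2.2.2 t ht l (mem_sInter.1 hl s hs)
  obtain ⟨L, hLsub, hL⟩ := zorn_superset_nonempty {L | IsLI T L} key L0 h
  exact ⟨L, ⟨hL.1, fun L' h1 h2 => subset_antisymm h2 (hL.2 h1 h2)⟩, hLsub⟩

variable [T2Space X]

theorem image_add_right_eq (hc : ∀ b : X, Continuous (· + b)) {T L : Set X}
    (hTc : IsCompact T) (hTadd : ∀ x ∈ T, ∀ y ∈ T, x + y ∈ T)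
    (hL : MinLI T L) {y : X} (hy : y ∈ L) : (· + y) '' T = L := by
  obtain ⟨⟨hne, hcl, hsub, hli⟩, hmin⟩ := hL
  have hyT : y ∈ T := hsub hy
  refine hmin _ ⟨⟨y + y, ⟨y, hyT, rfl⟩⟩, (hTc.image (hc y)).isClosed, ?_, ?_⟩ ?_
  · rintro _ ⟨t, ht, rfl⟩; exact hTadd t ht y hyT
  · rintro t ht _ ⟨t', ht', rfl⟩
    exact ⟨t + t', hTadd t ht t' ht', add_assoc t t' y⟩
  · rintro _ ⟨t, ht, rfl⟩; exact hli t ht y hy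

theorem exists_add_eq (hc : ∀ b : X, Continuous (· + b)) {T L : Set X}
    (hTc : IsCompact T) (hTadd : ∀ x ∈ T, ∀ y ∈ T, x + y ∈ T)
    (hL : MinLI T L) {x y : X} (hx : x ∈ L) (hy : y ∈ L) : ∃ t ∈ T, t + y = x := by
  rw [← image_add_right_eq hc hTc hTadd hL hy] at hx
  obtain ⟨t, ht, h⟩ := hx
  exact ⟨t, ht, h⟩

theorem minLI_add_right (hc : ∀ b : X, Continuous (· + b)) {T L : Set X}
    (hTc : IsCompact T) (hTadd : ∀ x ∈ T, ∀ y ∈ T, x + y ∈ T)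
    (hL : MinLI T L) {r : X} (hr : r ∈ T) : MinLI T ((· + r) '' L) := by
  have hLc : IsCompact L := hTc.of_isClosed_subset hL.1.2.1 hL.1.2.2.1
  constructor
  · refine ⟨hL.1.1.image _, (hLc.image (hc r)).isClosed, ?_, ?_⟩
    · rintro _ ⟨l, hl, rfl⟩; exact hTadd l (hL.1.2.2.1 hl) r hr
    · rintro t ht _ ⟨l, hl, rfl⟩
      exact ⟨t + l, hL.1.2.2.2 t ht l hl, add_assoc t l r⟩
  · rintro L'' h2 hsub2
    obtain ⟨z, hz⟩ := h2.1
    obtain ⟨y, hy, rfl⟩ := hsub2 hz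
    refine subset_antisymm hsub2 ?_
    rintro _ ⟨l, hl, rfl⟩
    obtain ⟨t, ht, htl⟩ := exists_add_eq hc hTc hTadd hL hl hy
    have h3 := h2.2.2.2 t ht _ hz
    rwa [← add_assoc, htl] at h3

theorem mini_mem_ideal (hc : ∀ b : X, Continuous (· + b)) {T M : Set X}
    (hTc : IsCompact T) (hTadd : ∀ x ∈ T, ∀ y ∈ T, x + y ∈ T)
    (hMne : M.Nonempty) (hMsub : M ⊆ T)
    (hMl : ∀ t ∈ T, ∀ m ∈ M, t + m ∈ M) (hMr : ∀ m ∈ M, ∀ t ∈ T, m + t ∈ M)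
    {x : X} (hx : Mini T x) : x ∈ M := by
  obtain ⟨L, hL, hxL⟩ := hx
  obtain ⟨j, hj⟩ := hMne
  have hjx : j + x ∈ L := hL.1.2.2.2 j (hMsub hj) x hxL
  obtain ⟨s, hs, hsx⟩ := exists_add_eq hc hTc hTadd hL hxL hjx
  have key : (s + j) + x = x := by rw [add_assoc]; exact hsx
  have h4 : (s + j) + x ∈ M := hMr _ (hMl s hs j hj) x (hL.1.2.2.1 hxL)
  rwa [key] at h4

theorem minLI_pi {ι : Type*} [CompactSpace X] (hc : ∀ b : X, Continuous (· + b))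
    {L : Set X} (hL : MinLI (univ : Set X) L) :
    MinLI (univ : Set (ι → X)) {f : ι → X | ∀ i, f i ∈ L} := by
  obtain ⟨y0, hy0⟩ := hL.1.1
  constructor
  · refine ⟨⟨fun _ => y0, fun _ => hy0⟩, ?_, subset_univ _, ?_⟩
    · have h1 : {f : ι → X | ∀ i, f i ∈ L} = ⋂ i, (fun f : ι → X => f i) ⁻¹' L := by
        ext f; simp
      rw [h1]
      exact isClosed_iInter fun i => hL.1.2.1.preimage (continuous_apply i)
    · intro t _ l hl i
      exact hL.1.2.2.2 (t i) trivial (l i) (hl i)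
  · rintro L'' h2 hsub2
    obtain ⟨y, hy⟩ := h2.1
    refine subset_antisymm hsub2 ?_
    intro x hx
    have hchoice : ∀ i, ∃ t, t + y i = x i := by
      intro i
      obtain ⟨t, -, ht⟩ := exists_add_eq hc isCompact_univ (fun _ _ _ _ => trivial) hL
        (hx i) (hsub2 hy i)
      exact ⟨t, ht⟩
    choose s hs using hchoice
    have hsy : s + y = x := funext fun i => hs i
    rw [← hsy]
    exact h2.2.2.2 s trivial y hy

section Ultra

variable {M : Type*} [AddSemigroup M] {N : Type*} [AddSemigroup N]

theorem mem_add_uf (A : Set M) (U V : Ultrafilter M) :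
    A ∈ U + V ↔ {x | {y | x + y ∈ A} ∈ V} ∈ U :=
  Ultrafilter.eventually_add U V (· ∈ A)

theorem map_add_uf (φ : M → N) (hφ : ∀ a b, φ (a + b) = φ a + φ b) (U V : Ultrafilter M) :
    Ultrafilter.map φ (U + V) = Ultrafilter.map φ U + Ultrafilter.map φ V := by
  refine Ultrafilter.ext fun A => ?_
  rw [Ultrafilter.mem_map, mem_add_uf A, mem_add_uf (φ ⁻¹' A), Ultrafilter.mem_map]
  have hinner : ∀ x : M, {y : M | x + y ∈ φ ⁻¹' A} = φ ⁻¹' {y : N | φ x + y ∈ A} := by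
    intro x; ext y; simp [hφ]
  have houter : {x : M | {y : M | x + y ∈ φ ⁻¹' A} ∈ V}
      = φ ⁻¹' {x : N | {y : N | x + y ∈ A} ∈ Ultrafilter.map φ V} := by
    ext x
    simp only [Set.mem_setOf_eq, Set.mem_preimage, Ultrafilter.mem_map]
    constructor
    · intro h; exact (hinner x) ▸ h
    · intro h; exact (hinner x).symm ▸ h
  rw [houter]

omit [AddSemigroup M] [AddSemigroup N] in
theorem continuous_map_uf (φ : M → N) :
    Continuous (Ultrafilter.map φ : Ultrafilter M → Ultrafilter N) := by
  refine ultrafilterBasis_is_basis.continuous_iff.2 ?_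
  refine Set.forall_mem_range.mpr fun s => ?_
  have h : (Ultrafilter.map φ) ⁻¹' {u : Ultrafilter N | s ∈ u}
      = {u : Ultrafilter M | φ ⁻¹' s ∈ u} := by
    ext u; simp [Ultrafilter.mem_map]
  rw [h]
  exact ultrafilter_isOpen_basic _

theorem mem_pure_add_uf (g : M) (q : Ultrafilter M) (A : Set M) :
    A ∈ (pure g : Ultrafilter M) + q ↔ {y | g + y ∈ A} ∈ q := by
  rw [mem_add_uf]
  exact Ultrafilter.mem_pure

end Ultra
section Bridge

variable {G : Type*} [AddCommSemigroup G] [Nonempty G]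

theorem exists_mini_of_PS {S : Set G} (hS : PiecewiseSyndetic S) :
    ∃ p : Ultrafilter G, Mini (Set.univ : Set (Ultrafilter G)) p ∧ S ∈ p := by
  classical
  obtain ⟨F, hFne, hThick⟩ := hS
  set T0 : Set G := {s : G | ∃ g ∈ F, g + s ∈ S} with hT0def
  have hFIP : ∀ Ts : Finset (Set G),
      (↑Ts : Set (Set G)) ⊆ Set.range (fun x : G => {s | x + s ∈ T0}) →
      (⋂₀ (↑Ts : Set (Set G))).Nonempty := by
    intro Ts hTs
    rcases Finset.eq_empty_or_nonempty Ts with rfl | hTne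
    · simp
    · have hsel : ∀ t ∈ Ts, ∃ x : G, {s | x + s ∈ T0} = t := fun t ht => hTs ht
      choose! f hfspec using hsel
      obtain ⟨z, hz⟩ := hThick (Ts.image f) (hTne.image f)
      refine ⟨z, Set.mem_sInter.2 fun t ht => ?_⟩
      have ht' : t ∈ Ts := ht
      rw [← hfspec t ht']
      exact hz (f t) (Finset.mem_image_of_mem f ht')
  obtain ⟨q0, hq0⟩ := Ultrafilter.exists_ultrafilter_of_finite_inter_nonempty _ hFIP
  have hq0' : ∀ x : G, {s | x + s ∈ T0} ∈ q0 :=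
    fun x => hq0 (Set.mem_range_self x)
  have hJ : IsLI (Set.univ : Set (Ultrafilter G)) ((· + q0) '' Set.univ) := by
    refine ⟨⟨q0 + q0, q0, trivial, rfl⟩,
      (isCompact_univ.image (Ultrafilter.continuous_add_left q0)).isClosed,
      Set.subset_univ _, ?_⟩
    rintro r - _ ⟨r', -, rfl⟩
    exact ⟨r + r', trivial, add_assoc r r' q0⟩
  obtain ⟨L, hL, hLsub⟩ := exists_minLI hJ
  obtain ⟨q1, hq1⟩ := hL.1.1
  have hT0q1 : T0 ∈ q1 := by
    obtain ⟨r, -, rfl⟩ := hLsub hq1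
    rw [mem_add_uf]
    have huniv : {x : G | {y | x + y ∈ T0} ∈ q0} = Set.univ :=
      Set.eq_univ_of_forall fun x => hq0' x
    rw [huniv]
    exact Filter.univ_mem
  have hT0union : (⋃ g ∈ (F : Set G), {s : G | g + s ∈ S}) ∈ q1 := by
    have : T0 = ⋃ g ∈ (F : Set G), {s : G | g + s ∈ S} := by
      ext s; simp [hT0def]
    rwa [this] at hT0q1
  obtain ⟨g, hgF, hg⟩ :=
    (Ultrafilter.finite_biUnion_mem_iff (F : Set G).toFinite).1 hT0union
  refine ⟨pure g + q1, ⟨L, hL, hL.1.2.2.2 _ trivial _ hq1⟩, ?_⟩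
  rw [mem_pure_add_uf]
  exact hg

theorem PS_of_mini {A : Set G} {q : Ultrafilter G}
    (hq : Mini (Set.univ : Set (Ultrafilter G)) q) (hA : A ∈ q) :
    PiecewiseSyndetic A := by
  obtain ⟨L, hL, hqL⟩ := hq
  have hcover : L ⊆ ⋃ x : G, {q' : Ultrafilter G | {s | x + s ∈ A} ∈ q'} := by
    intro q' hq'
    obtain ⟨r, -, hr⟩ := exists_add_eq (fun b => Ultrafilter.continuous_add_left b)
      isCompact_univ (fun _ _ _ _ => trivial) hL hqL hq'
    have hAr : A ∈ r + q' := by rw [hr]; exact hA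
    rw [mem_add_uf] at hAr
    obtain ⟨x, hx⟩ := Ultrafilter.nonempty_of_mem hAr
    exact Set.mem_iUnion.2 ⟨x, hx⟩
  have hLc : IsCompact L := hL.1.2.1.isCompact
  obtain ⟨Gf, hGf⟩ := hLc.elim_finite_subcover
    (fun x : G => {q' : Ultrafilter G | {s | x + s ∈ A} ∈ q'})
    (fun x => ultrafilter_isOpen_basic _) hcover
  have hGfne : Gf.Nonempty := by
    rcases Finset.eq_empty_or_nonempty Gf with rfl | h
    · exfalso
      obtain ⟨q', hq'⟩ := hL.1.1
      simpa using hGf hq'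
    · exact h
  refine ⟨Gf, hGfne, ?_⟩
  intro E hEne
  have hCe : ∀ e : G, {y : G | ∃ x ∈ Gf, x + (e + y) ∈ A} ∈ q := by
    intro e
    have hmem : (pure e + q) ∈ L := hL.1.2.2.2 _ trivial _ hqL
    have hcov := hGf hmem
    rw [Set.mem_iUnion₂] at hcov
    obtain ⟨x, hxGf, hx⟩ := hcov
    have hx' : {s | x + s ∈ A} ∈ pure e + q := hx
    rw [mem_pure_add_uf] at hx'
    exact Filter.mem_of_superset hx' fun y hy => ⟨x, hxGf, hy⟩
  have hint : (⋂ e ∈ (E : Set G), {y : G | ∃ x ∈ Gf, x + (e + y) ∈ A}) ∈ q := by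
    rw [← Ultrafilter.mem_coe]
    exact (Filter.biInter_mem E.finite_toSet).2 fun e _ => hCe e
  obtain ⟨z, hz⟩ := Ultrafilter.nonempty_of_mem hint
  refine ⟨z, fun e he => ?_⟩
  have hze := Set.mem_iInter₂.1 hz e he
  obtain ⟨x, hxGf, hx⟩ := hze
  exact ⟨x, hxGf, hx⟩

end Bridge
end FGaux

open FGaux Set in
/-- Furstenberg–Glasner: if `S ⊆ ℤ` is piecewise syndetic and `k ≥ 1`, then the set of
pairs `(a, d)` with `a, a + d, …, a + k·d ∈ S` is piecewise syndetic in `ℤ²`. -/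
theorem stmt0 (k : ℕ) (hk : 0 < k) (S : Set ℤ) (hS : PiecewiseSyndetic S) :
    PiecewiseSyndetic {p : ℤ × ℤ | ∀ i : ℕ, i ≤ k → p.1 + (i : ℤ) * p.2 ∈ S} := by
  classical
  set A := {p : ℤ × ℤ | ∀ i : ℕ, i ≤ k → p.1 + (i : ℤ) * p.2 ∈ S} with hAdef
  set ψ : Fin (k+1) → ℤ × ℤ → ℤ := fun i p => p.1 + ((i : ℕ) : ℤ) * p.2 with hψdef
  have hψadd : ∀ (i : Fin (k+1)) (a b : ℤ × ℤ), ψ i (a + b) = ψ i a + ψ i b := by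
    intro i a b
    simp only [hψdef, Prod.fst_add, Prod.snd_add]
    ring
  set Φ : Ultrafilter (ℤ × ℤ) → (Fin (k+1) → Ultrafilter ℤ) :=
    fun q i => Ultrafilter.map (ψ i) q with hΦdef
  have hΦadd : ∀ q r, Φ (q + r) = Φ q + Φ r :=
    fun q r => funext fun i => map_add_uf (ψ i) (hψadd i) q r
  have hΦcont : Continuous Φ := continuous_pi fun i =>
    (continuous_map_uf (ψ i)).comp continuous_id
  set T : Set (Fin (k+1) → Ultrafilter ℤ) := Set.range Φ with hTdef
  have hTc : IsCompact T := isCompact_range hΦcont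
  have hTadd : ∀ x ∈ T, ∀ y ∈ T, x + y ∈ T := by
    rintro _ ⟨q, rfl⟩ _ ⟨r, rfl⟩
    exact ⟨q + r, hΦadd q r⟩
  have hcY : ∀ b : (Fin (k+1) → Ultrafilter ℤ), Continuous (· + b) :=
    fun b => continuous_pi fun i =>
      (Ultrafilter.continuous_add_left (b i)).comp (continuous_apply i)
  obtain ⟨p, ⟨L, hL, hpL⟩, hSp⟩ := exists_mini_of_PS hS
  set LY : Set (Fin (k+1) → Ultrafilter ℤ) := {f | ∀ i, f i ∈ L} with hLYdef
  have hLY : MinLI univ LY := minLI_pi (fun b => Ultrafilter.continuous_add_left b) hL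
  set pbar : Fin (k+1) → Ultrafilter ℤ := fun _ => p with hpbardef
  have hpbarLY : pbar ∈ LY := fun i => hpL
  set ι0 : ℤ → ℤ × ℤ := fun a => (a, 0) with hι0def
  have hΦι : Φ (Ultrafilter.map ι0 p) = pbar := by
    funext i
    show Ultrafilter.map (ψ i) (Ultrafilter.map ι0 p) = p
    rw [Ultrafilter.map_map]
    have hcomp : ψ i ∘ ι0 = id := by
      funext a; simp [hψdef, hι0def]
    rw [hcomp, Ultrafilter.map_id]
  have hpbarT : pbar ∈ T := ⟨Ultrafilter.map ι0 p, hΦι⟩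
  have hTLY : IsLI T (T ∩ LY) := by
    refine ⟨⟨pbar, hpbarT, hpbarLY⟩, hTc.isClosed.inter hLY.1.2.1, inter_subset_left, ?_⟩
    intro t ht l hl
    exact ⟨hTadd t ht l hl.1, hLY.1.2.2.2 t trivial l hl.2⟩
  obtain ⟨LT, hLT, hLTsub⟩ := exists_minLI hTLY
  have hLTadd : ∀ x ∈ LT, ∀ y ∈ LT, x + y ∈ LT := by
    intro x hx y hy
    exact hLT.1.2.2.2 x ((hLTsub hx).1) y hy
  obtain ⟨f, hfLT, hff⟩ := exists_idempotent_in_compact_add_subsemigroup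
    hcY LT hLT.1.1 hLT.1.2.1.isCompact hLTadd
  have hpf : pbar + f = pbar := by
    have hfLY : f ∈ LY := (hLTsub hfLT).2
    obtain ⟨s, -, hs⟩ := exists_add_eq hcY isCompact_univ (fun _ _ _ _ => trivial)
      hLY hpbarLY hfLY
    calc pbar + f = (s + f) + f := by rw [hs]
    _ = s + (f + f) := add_assoc s f f
    _ = s + f := by rw [hff]
    _ = pbar := hs
  set KKR : Set (Ultrafilter (ℤ × ℤ)) := {q | Mini univ q} with hKKRdef
  have hKKRne : KKR.Nonempty := by
    obtain ⟨L', hL', -⟩ := exists_minLI (T := (univ : Set (Ultrafilter (ℤ × ℤ))))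
      ⟨univ_nonempty, isClosed_univ, subset_rfl, fun _ _ _ _ => trivial⟩
    obtain ⟨q', hq'⟩ := hL'.1.1
    exact ⟨q', L', hL', hq'⟩
  set MM : Set (Fin (k+1) → Ultrafilter ℤ) := Φ '' KKR with hMMdef
  have hMMne : MM.Nonempty := hKKRne.image Φ
  have hMMsub : MM ⊆ T := by rintro _ ⟨q, -, rfl⟩; exact ⟨q, rfl⟩
  have hMMl : ∀ t ∈ T, ∀ m ∈ MM, t + m ∈ MM := by
    rintro _ ⟨r, rfl⟩ _ ⟨q, ⟨Lq, hLq, hqLq⟩, rfl⟩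
    exact ⟨r + q, ⟨Lq, hLq, hLq.1.2.2.2 r trivial q hqLq⟩, hΦadd r q⟩
  have hMMr : ∀ m ∈ MM, ∀ t ∈ T, m + t ∈ MM := by
    rintro _ ⟨q, ⟨Lq, hLq, hqLq⟩, rfl⟩ _ ⟨r, rfl⟩
    refine ⟨q + r, ⟨(· + r) '' Lq, ?_, ⟨q, hqLq, rfl⟩⟩, hΦadd q r⟩
    exact minLI_add_right (fun b => Ultrafilter.continuous_add_left b)
      isCompact_univ (fun _ _ _ _ => trivial) hLq trivial
  have hfMM : f ∈ MM := mini_mem_ideal hcY hTc hTadd hMMne hMMsub hMMl hMMr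
    ⟨LT, hLT, hfLT⟩
  obtain ⟨qf, hqfKKR, hqff⟩ := hfMM
  set q : Ultrafilter (ℤ × ℤ) := Ultrafilter.map ι0 p + qf with hqdef
  have hqmini : Mini univ q := by
    obtain ⟨Lq, hLq, hqLq⟩ := hqfKKR
    exact ⟨Lq, hLq, hLq.1.2.2.2 _ trivial _ hqLq⟩
  have hΦq : Φ q = pbar := by
    rw [hqdef, hΦadd, hΦι, hqff, hpf]
  have hAq : A ∈ q := by
    have hiS : ∀ i : Fin (k+1), {pr : ℤ × ℤ | ψ i pr ∈ S} ∈ q := by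
      intro i
      have hmap : Ultrafilter.map (ψ i) q = p := congrFun hΦq i
      have hSmem : S ∈ Ultrafilter.map (ψ i) q := by rw [hmap]; exact hSp
      rw [Ultrafilter.mem_map] at hSmem
      exact hSmem
    have hintr : (⋂ i : Fin (k+1), {pr : ℤ × ℤ | ψ i pr ∈ S}) ∈ q := by
      rw [← Ultrafilter.mem_coe]
      exact Filter.iInter_mem.2 fun i => hiS i
    refine Filter.mem_of_superset hintr ?_
    intro pr hpr i hik
    have h1 := Set.mem_iInter.1 hpr ⟨i, Nat.lt_succ_of_le hik⟩
    simpa [hψdef] using h1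
  exact PS_of_mini hqmini hAq
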